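/- For any substring S of T, the number of positions covered by occurrences of S in T equals Σ over all occurrences starting positions i of min(|S|, next(i) - i), where next(i) is the next occurrence position of S after i (and next(i) - i is taken to be |S| for the last occurrence). Equivalently, occ(S)·|S| minus Σ_{(i,j)∈OvOcc(S)} (|S| - (j - i)). -/

import Mathlib

/-- `S` occurs in `T` at (0-indexed) position `i`. -/
def occursAt {α : Type*} (T S : List α) (i : ℕ) : Prop :=
  (T.drop i).take S.length = S

/-- `V` is primitive: it is not a proper power. -/
def Primitive {α : Type*} (V : List α) : Prop :=
  ∀ (U : List α) (d : ℕ), 0 < d → V = (List.replicate d U).flatten → d = 1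

/-- `p` is a period of `F`. -/
def IsPeriod {α : Type*} (F : List α) (p : ℕ) : Prop :=
  1 ≤ p ∧ ∀ k, k + p < F.length → F[k]? = F[k + p]?

/-- `p` is the smallest period of `F`. -/
def MinPeriod {α : Type*} (F : List α) (p : ℕ) : Prop :=
  IsPeriod F p ∧ ∀ q, IsPeriod F q → p ≤ q

/-- `(a,b,p)` is a run in `T` (0-indexed, positions `a..b` inclusive). -/
def IsRun {α : Type*} (T : List α) (a b p : ℕ) : Prop :=
  a ≤ b ∧ b < T.length ∧
  MinPeriod ((T.drop a).take (b - a + 1)) p ∧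
  2 * p ≤ b - a + 1 ∧
  (a = 0 ∨ T[a - 1]? ≠ T[a - 1 + p]?) ∧
  (b + 1 = T.length ∨ T[b + 1]? ≠ T[b + 1 - p]?)

/-- `(i,j)` is a consecutive occurrence of `S` in `T`. -/
def ConsOcc {α : Type*} (T S : List α) (i j : ℕ) : Prop :=
  i < j ∧ occursAt T S i ∧ occursAt T S j ∧ ∀ k, i < k → k < j → ¬ occursAt T S k

/-- Overlapping consecutive occurrences of `S` in `T`. -/
def OvOcc {α : Type*} (T S : List α) : Set (ℕ × ℕ) :=
  {q | ConsOcc T S q.1 q.2 ∧ q.2 < q.1 + S.length}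

/-- Non-overlapping consecutive occurrences of `S` in `T`. -/
def NovOcc {α : Type*} (T S : List α) : Set (ℕ × ℕ) :=
  {q | ConsOcc T S q.1 q.2 ∧ q.1 + S.length ≤ q.2}

/-- Positions of `T` covered by occurrences of `S`. -/
def Covered {α : Type*} (T S : List α) : Set ℕ :=
  {k | ∃ i, occursAt T S i ∧ i ≤ k ∧ k < i + S.length}

/-- Number of positions of `T` covered by occurrences of `S`. -/
noncomputable def Cov {α : Type*} (T S : List α) : ℕ := (Covered T S).ncard

/-- Number of occurrences of `S` in `T`. -/
noncomputable def Occ {α : Type*} (T S : List α) : ℕ := {i | occursAt T S i}.ncard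

/-- One plus the number of non-overlapping consecutive occurrences. -/
noncomputable def nov {α : Type*} (T S : List α) : ℕ := 1 + (NovOcc T S).ncard

/-- `S` is right-branching in `T` (end of text acts as a special end marker `none`). -/
def RightBranching {α : Type*} (T S : List α) : Prop :=
  ∃ i j, occursAt T S i ∧ occursAt T S j ∧ T[i + S.length]? ≠ T[j + S.length]?

def nextv (L : ℕ) (Q : Finset ℕ) (i : ℕ) : ℕ :=
  if h : (Q.filter (fun j => i < j)).Nonempty then (Q.filter (fun j => i < j)).min' h
  else i + L

lemma cov_core (L : ℕ) (Q : Finset ℕ) :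
    (Q.biUnion fun i => Finset.Ico i (i + L)).card
      = ∑ i ∈ Q, min L (nextv L Q i - i) := by
  induction Q using Finset.induction_on_max with
  | empty => simp
  | insert a s hlt ih =>
    have ha : a ∉ s := fun h => lt_irrefl a (hlt a h)
    rcases s.eq_empty_or_nonempty with rfl | hs
    · simp [nextv, Finset.filter_singleton]
    · set M := s.max' hs with hM
      have hMs : M ∈ s := s.max'_mem hs
      have hMa : M < a := hlt M hMs
      have hle : ∀ x ∈ s, x ≤ M := fun x hx => s.le_max' x hx
      -- nextv at a in insert a s : filter empty
      have hfa : (insert a s).filter (fun j => a < j) = ∅ := by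
        rw [Finset.filter_eq_empty_iff]
        intro j hj
        rcases Finset.mem_insert.mp hj with rfl | hj
        · omega
        · have := hlt j hj; omega
      have hna : nextv L (insert a s) a = a + L := by
        rw [nextv, dif_neg]
        rw [hfa]; exact Finset.not_nonempty_empty
      -- nextv at M in insert a s : = a
      have hfM : s.filter (fun j => M < j) = ∅ := by
        rw [Finset.filter_eq_empty_iff]
        intro j hj; have := hle j hj; omega
      have hfM2 : (insert a s).filter (fun j => M < j) = {a} := by
        rw [Finset.filter_insert, if_pos hMa, hfM]; simp
      have hnM : nextv L (insert a s) M = a := by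
        rw [nextv, dif_pos (by rw [hfM2]; exact Finset.singleton_nonempty a)]
        simp [hfM2]
      have hnMold : nextv L s M = M + L := by
        rw [nextv, dif_neg]; rw [hfM]; exact Finset.not_nonempty_empty
      -- nextv at i ∈ erase M
      have hni : ∀ i ∈ s.erase M, nextv L (insert a s) i = nextv L s i := by
        intro i hi
        obtain ⟨hiM, his⟩ := Finset.mem_erase.mp hi
        have hiltM : i < M := lt_of_le_of_ne (hle i his) hiM
        have hfne : (s.filter (fun j => i < j)).Nonempty :=
          ⟨M, Finset.mem_filter.mpr ⟨hMs, hiltM⟩⟩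
        have hins : (insert a s).filter (fun j => i < j)
            = insert a (s.filter (fun j => i < j)) := by
          rw [Finset.filter_insert, if_pos (lt_trans hiltM hMa)]
        have hmin : ((insert a s).filter (fun j => i < j)).min' (by
            rw [hins]; exact (Finset.insert_nonempty a _)) = (s.filter (fun j => i < j)).min' hfne := by
          have : ((insert a s).filter (fun j => i < j)).min'
              (by rw [hins]; exact Finset.insert_nonempty a _)
              = (insert a (s.filter (fun j => i < j))).min' (Finset.insert_nonempty a _) := by
            congr 1
          rw [this, Finset.min'_insert]
          have hmem := Finset.min'_mem _ hfne
          have := hle _ (Finset.mem_filter.mp hmem).1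
          exact min_eq_right (by omega)
        rw [nextv, dif_pos (by rw [hins]; exact Finset.insert_nonempty a _), hmin,
          nextv, dif_pos hfne]
      -- RHS computation
      have hRHS : ∑ i ∈ insert a s, min L (nextv L (insert a s) i - i)
          = ∑ i ∈ s, min L (nextv L s i - i) + min L (a - M) := by
        rw [Finset.sum_insert ha, hna]
        rw [← Finset.add_sum_erase s _ hMs, ← Finset.add_sum_erase s
          (fun i => min L (nextv L s i - i)) hMs, hnM, hnMold]
        rw [Finset.sum_congr rfl (fun i hi => by rw [hni i hi])]
        omega
      -- LHS computation
      have hdiff : Finset.Ico a (a + L) \ (s.biUnion fun i => Finset.Ico i (i + L))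
          = Finset.Ico (max (M + L) a) (a + L) := by
        ext x
        simp only [Finset.mem_sdiff, Finset.mem_Ico, Finset.mem_biUnion, not_exists,
          not_and, max_le_iff]
        constructor
        · rintro ⟨⟨hax, hxa⟩, hno⟩
          refine ⟨⟨?_, hax⟩, hxa⟩
          have := hno M hMs
          omega
        · rintro ⟨⟨hMx, hax⟩, hxa⟩
          exact ⟨⟨hax, hxa⟩, fun i hi hix => by have := hle i hi; omega⟩
      have hLHS : ((insert a s).biUnion fun i => Finset.Ico i (i + L)).card
          = (s.biUnion fun i => Finset.Ico i (i + L)).card + min L (a - M) := by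
        rw [Finset.biUnion_insert, ← Finset.card_sdiff_add_card, hdiff,
          Nat.card_Ico]
        omega
      rw [hLHS, hRHS, ih]

theorem stmt8 {α : Type*} (T S : List α) (hS : S ≠ [])
    (hsub : ∃ i, occursAt T S i) :
    Cov T S = Occ T S * S.length - ∑ᶠ q ∈ OvOcc T S, (S.length - (q.2 - q.1)) := by
  classical
  set L := S.length with hLdef
  have hL : 0 < L := List.length_pos_iff.mpr hS
  have hocclt : ∀ i, occursAt T S i → i < T.length := by
    intro i hi
    have h2 := congrArg List.length hi
    simp only [List.length_take, List.length_drop] at h2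
    omega
  have hPfin : {i | occursAt T S i}.Finite :=
    Set.Finite.subset (Set.finite_Iio T.length) (fun i hi => hocclt i hi)
  set Q := hPfin.toFinset with hQdef
  have hmemQ : ∀ i, i ∈ Q ↔ occursAt T S i := fun i => hPfin.mem_toFinset
  -- ConsOcc ↔ nextv facts
  have hnext_cons : ∀ i ∈ Q, ((Q.filter (fun j => i < j)).Nonempty) →
      ConsOcc T S i (nextv L Q i) := by
    intro i hi hne
    have hnv : nextv L Q i = (Q.filter (fun j => i < j)).min' hne := by
      rw [nextv, dif_pos hne]
    have hj : nextv L Q i ∈ Q.filter (fun j => i < j) := by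
      rw [hnv]; exact Finset.min'_mem _ hne
    rw [Finset.mem_filter] at hj
    refine ⟨hj.2, (hmemQ i).mp hi, (hmemQ _).mp hj.1, fun k hik hkj hk => ?_⟩
    have hkF : k ∈ Q.filter (fun j => i < j) :=
      Finset.mem_filter.mpr ⟨(hmemQ k).mpr hk, hik⟩
    have := Finset.min'_le _ k hkF
    omega
  have hcons_next : ∀ i j, ConsOcc T S i j → i ∈ Q ∧ j = nextv L Q i := by
    rintro i j ⟨hij, hoi, hoj, hbet⟩
    have hiQ : i ∈ Q := (hmemQ i).mpr hoi
    have hjF : j ∈ Q.filter (fun j => i < j) :=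
      Finset.mem_filter.mpr ⟨(hmemQ j).mpr hoj, hij⟩
    have hne : (Q.filter (fun j => i < j)).Nonempty := ⟨j, hjF⟩
    have hnv : nextv L Q i = (Q.filter (fun j => i < j)).min' hne := by
      rw [nextv, dif_pos hne]
    have hmle : nextv L Q i ≤ j := by rw [hnv]; exact Finset.min'_le _ j hjF
    have hmF : nextv L Q i ∈ Q.filter (fun j => i < j) := by
      rw [hnv]; exact Finset.min'_mem _ hne
    rw [Finset.mem_filter] at hmF
    rcases lt_or_eq_of_le hmle with hlt | heq
    · exact absurd ((hmemQ _).mp hmF.1) (hbet _ hmF.2 hlt)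
    · exact ⟨hiQ, heq.symm⟩
  set Efin := Q.image (fun i => (i, nextv L Q i)) with hEdef
  have hOvsub : OvOcc T S ⊆ ↑Efin := by
    rintro ⟨i, j⟩ ⟨hc, hov⟩
    obtain ⟨hiQ, hj⟩ := hcons_next i j hc
    exact Finset.mem_coe.mpr (Finset.mem_image.mpr ⟨i, hiQ, by rw [← hj]⟩)
  have hOvFin : (OvOcc T S).Finite := Set.Finite.subset Efin.finite_toSet hOvsub
  -- the finsum
  have hsum : ∑ᶠ q ∈ OvOcc T S, (L - (q.2 - q.1)) = ∑ i ∈ Q, (L - (nextv L Q i - i)) := by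
    rw [finsum_mem_eq_finite_toFinset_sum _ hOvFin]
    have h1 : ∑ q ∈ Efin, (L - (q.2 - q.1)) = ∑ i ∈ Q, (L - (nextv L Q i - i)) := by
      rw [hEdef, Finset.sum_image]
      intro x _ y _ hxy
      exact (Prod.mk.injEq _ _ _ _).mp hxy |>.1
    rw [← h1]
    apply Finset.sum_subset
    · intro q hq
      exact hOvsub (hOvFin.mem_toFinset.mp hq)
    · rintro ⟨i, j⟩ hqE hqnot
      rw [Finset.mem_image] at hqE
      obtain ⟨x, hxQ, hx⟩ := hqE
      obtain ⟨rfl, rfl⟩ : x = i ∧ nextv L Q x = j := by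
        constructor
        · exact ((Prod.mk.injEq _ _ _ _).mp hx).1
        · exact ((Prod.mk.injEq _ _ _ _).mp hx).2
      by_cases hne : (Q.filter (fun j => x < j)).Nonempty
      · have hc := hnext_cons x hxQ hne
        have hnlt : ¬ (nextv L Q x < x + L) := by
          intro hlt
          exact (hOvFin.mem_toFinset.not.mp hqnot) ⟨hc, hlt⟩
        have hxlt : x < nextv L Q x := hc.1
        simp only
        omega
      · have : nextv L Q x = x + L := by rw [nextv, dif_neg hne]
        simp only [this]
        omega
  -- the covered set
  have hCov : Covered T S = ↑(Q.biUnion fun i => Finset.Ico i (i + L)) := by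
    ext k
    simp only [Covered, Set.mem_setOf_eq, Finset.coe_biUnion, Finset.mem_coe,
      Set.mem_iUnion, Finset.mem_Ico, hmemQ]
    constructor
    · rintro ⟨i, h1, h2, h3⟩; exact ⟨i, h1, h2, h3⟩
    · rintro ⟨i, h1, h2, h3⟩; exact ⟨i, h1, h2, h3⟩
  have hCovcard : Cov T S = (Q.biUnion fun i => Finset.Ico i (i + L)).card := by
    rw [Cov, hCov, Set.ncard_coe_finset]
  have hOcc : Occ T S = Q.card := by
    rw [Occ, show {i | occursAt T S i} = ↑Q from by ext i; simp [hmemQ],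
      Set.ncard_coe_finset]
  rw [hCovcard, hOcc, hsum, cov_core L Q]
  have hkey : ∑ i ∈ Q, min L (nextv L Q i - i) + ∑ i ∈ Q, (L - (nextv L Q i - i))
      = Q.card * L := by
    rw [← Finset.sum_add_distrib,
      Finset.sum_congr rfl (fun i _ => show min L (nextv L Q i - i) + (L - (nextv L Q i - i)) = L by omega),
      Finset.sum_const, smul_eq_mul]
  omega
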